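/- Let H be a complex Hilbert space, U: H → H a unitary operator, and let φ ∈ H belong to the closed linear span of the eigenvectors of U. Then for every ε > 0 there exists a finite-dimensional subspace W of H such that for every n ∈ ℕ, ‖(Id − π_W) Uⁿφ‖ < ε, where π_W is the orthogonal projection onto W. -/

import Mathlib

open Filter Topology

/-- if φ lies in the closed span of the eigenvectors of a unitary
operator U, then for every ε > 0 there is a finite-dimensional subspace W such
that ‖(Id − π_W) Uⁿφ‖ < ε for all n. -/
theorem discrete_spectrum_uniform_approximation {H : Type*} [NormedAddCommGroup H]
    [InnerProductSpace ℂ H] [CompleteSpace H]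
    (U : H →L[ℂ] H) (hU_iso : ∀ x : H, ‖U x‖ = ‖x‖) (hU_surj : Function.Surjective U)
    (φ : H)
    (hφ : φ ∈ (Submodule.span ℂ {v : H | v ≠ 0 ∧ ∃ c : ℂ, U v = c • v}).topologicalClosure)
    (ε : ℝ) (hε : 0 < ε) :
    ∃ (W : Submodule ℂ H) (hfd : FiniteDimensional ℂ W),
      ∀ n : ℕ,
        ‖(U ^ n) φ - (letI := hfd; ((Submodule.orthogonalProjection W ((U ^ n) φ) : W) : H))‖ < ε := by
  -- find ψ in the span with ‖φ - ψ‖ < ε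
  have hφ' : φ ∈ closure ((Submodule.span ℂ {v : H | v ≠ 0 ∧ ∃ c : ℂ, U v = c • v}) : Set H) := hφ
  obtain ⟨ψ, hψ, hdist⟩ := Metric.mem_closure_iff.1 hφ' ε hε
  obtain ⟨T, hTsub, hψT⟩ := Submodule.mem_span_finite_of_mem_span hψ
  refine ⟨Submodule.span ℂ (T : Set H), ?_, ?_⟩
  · exact FiniteDimensional.span_of_finite ℂ T.finite_toSet
  have hiso : ∀ m : ℕ, ∀ x : H, ‖(U ^ m) x‖ = ‖x‖ := by
    intro m
    induction m with
    | zero => simp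
    | succ k ih =>
      intro x
      have : (U ^ (k + 1)) x = (U ^ k) (U x) := by rw [pow_succ]; rfl
      rw [this, ih, hU_iso]
  have hinv : ∀ m : ℕ, ∀ x ∈ Submodule.span ℂ (T : Set H),
      (U ^ m) x ∈ Submodule.span ℂ (T : Set H) := by
    intro m
    induction m with
    | zero => intro x hx; simpa using hx
    | succ k ih =>
      intro x hx
      have hUx : U x ∈ Submodule.span ℂ (T : Set H) := by
        refine Submodule.span_induction (fun v hv => ?_) (by simp)
          (fun a b _ _ ha hb => by simpa [map_add] using Submodule.add_mem _ ha hb)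
          (fun c a _ ha => by simpa [map_smul] using Submodule.smul_mem _ c ha) hx
        obtain ⟨-, c, hc⟩ := hTsub hv
        rw [hc]
        exact Submodule.smul_mem _ c (Submodule.subset_span hv)
      have := ih (U x) hUx
      simpa [pow_succ, pow_succ'] using this
  intro n
  have hmem : (U ^ n) ψ ∈ Submodule.span ℂ (T : Set H) := hinv n ψ hψT
  -- the projection minimizes distance
  have key : ‖(U ^ n) φ - ((Submodule.orthogonalProjection (Submodule.span ℂ (T : Set H)) ((U ^ n) φ) : _) : H)‖
      ≤ ‖(U ^ n) φ - (U ^ n) ψ‖ := by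
    rw [← Submodule.starProjection_apply, Submodule.starProjection_minimal]
    exact ciInf_le ⟨0, Set.forall_mem_range.2 fun _ => norm_nonneg _⟩ (⟨(U ^ n) ψ, hmem⟩ : Submodule.span ℂ (T : Set H))
  calc _ ≤ ‖(U ^ n) φ - (U ^ n) ψ‖ := key
    _ = ‖φ - ψ‖ := by rw [← map_sub, hiso n]
    _ < ε := by rw [← dist_eq_norm] at *; exact hdist
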